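/- Let f: 2^N → ℤ≥0 be monotone submodular with f(∅)=0, x ∈ P(f), d ∈ ℝ^N_+ with f_{x,d}(N) = f_{x,d}(N∖{j}) for all j ∈ N. Fix i ∈ N and Δ_i > 0, and let d' be d with d_i replaced by d_i − Δ_i ≥ 0. For any k ≠ i, let δ_k := f_{x,d'}(N) − f_{x,d'}(N∖{k}). Then δ_k = Δ_i if i ⪯ k (with respect to x, d), and δ_k < Δ_i otherwise. -/

import Mathlib

open Finset

noncomputable def fxd {N : Type*} [DecidableEq N] [Fintype N]
    (f : Finset N → ℤ) (x d : N → ℝ) (S : Finset N) : ℝ :=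
  S.powerset.inf' (S.powerset_nonempty) fun S' =>
    (f S' : ℝ) - ∑ i ∈ S', x i + ∑ i ∈ S \ S', d i

private lemma inf'_sub_const {β : Type*} (s : Finset β) (hs : s.Nonempty) (g : β → ℝ) (c : ℝ) :
    (s.inf' hs fun a => g a - c) = s.inf' hs g - c := by
  have h := Finset.apply_inf'_eq_inf'_comp hs (f := g) (fun y => y - c)
    (fun u v => by exact (min_sub_sub_right u v c).symm)
  simpa [Function.comp] using h.symm

theorem stmt13 {N : Type*} [DecidableEq N] [Fintype N]
    (f : Finset N → ℤ)
    (hf0 : f ∅ = 0) (hfnn : ∀ S, 0 ≤ f S)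
    (hmono : ∀ S T : Finset N, S ⊆ T → f S ≤ f T)
    (hsub : ∀ (S T : Finset N) (e : N), S ⊆ T → e ∉ T →
      f (insert e T) - f T ≤ f (insert e S) - f S)
    (x d : N → ℝ) (hx0 : ∀ i, 0 ≤ x i) (hd0 : ∀ i, 0 ≤ d i)
    (hxP : ∀ S : Finset N, ∑ i ∈ S, x i ≤ (f S : ℝ))
    (hnoclinch : ∀ j : N, fxd f x d univ = fxd f x d (univ \ {j}))
    (i : N) (Δ : ℝ) (hΔ : 0 < Δ) (hΔd : 0 ≤ d i - Δ)
    (k : N) (hki : k ≠ i) :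
    (fxd f x (Function.update d k 0) univ
        - fxd f x (Function.update d k 0) (univ \ {i}) = Function.update d k 0 i →
      fxd f x (Function.update d i (d i - Δ)) univ
        - fxd f x (Function.update d i (d i - Δ)) (univ \ {k}) = Δ) ∧
    (fxd f x (Function.update d k 0) univ
        - fxd f x (Function.update d k 0) (univ \ {i}) ≠ Function.update d k 0 i →
      fxd f x (Function.update d i (d i - Δ)) univ
        - fxd f x (Function.update d i (d i - Δ)) (univ \ {k}) < Δ) := by
  classical
  have hik : i ≠ k := hki.symm
  set d' := Function.update d i (d i - Δ) with hd'
  set dk0 := Function.update d k 0 with hdk0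
  set v : Finset N → ℝ := fun S' => (f S' : ℝ) - ∑ j ∈ S', x j + ∑ j ∈ univ \ S', d j with hv
  set pa := univ.powerset.filter (fun S' : Finset N => i ∈ S' ∧ k ∉ S') with hpa
  set pa' := univ.powerset.filter (fun S' : Finset N => k ∈ S' ∧ i ∉ S') with hpa'
  set pb := univ.powerset.filter (fun S' : Finset N => i ∈ S' ∧ k ∈ S') with hpb
  set pm := univ.powerset.filter (fun S' : Finset N => i ∉ S' ∧ k ∉ S') with hpm
  have hmpa : ∀ S' : Finset N, S' ∈ pa ↔ i ∈ S' ∧ k ∉ S' := fun S' => by simp [hpa]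
  have hmpa' : ∀ S' : Finset N, S' ∈ pa' ↔ k ∈ S' ∧ i ∉ S' := fun S' => by simp [hpa']
  have hmpb : ∀ S' : Finset N, S' ∈ pb ↔ i ∈ S' ∧ k ∈ S' := fun S' => by simp [hpb]
  have hmpm : ∀ S' : Finset N, S' ∈ pm ↔ i ∉ S' ∧ k ∉ S' := fun S' => by simp [hpm]
  have hane : pa.Nonempty := ⟨{i}, (hmpa _).2 ⟨by simp, by simp [hki]⟩⟩
  have ha'ne : pa'.Nonempty := ⟨{k}, (hmpa' _).2 ⟨by simp, by simp [hik]⟩⟩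
  have hbne : pb.Nonempty := ⟨{i, k}, (hmpb _).2 ⟨by simp, by simp⟩⟩
  have hmne : pm.Nonempty := ⟨∅, (hmpm _).2 ⟨by simp, by simp⟩⟩
  set a := pa.inf' hane v with ha
  set a' := pa'.inf' ha'ne v with ha'2
  set b := pb.inf' hbne v with hb
  set m := pm.inf' hmne v with hm
  -- sum helper lemmas
  have hdiff : ∀ (w : N → ℝ) (j : N) (S' : Finset N), j ∉ S' →
      ∑ l ∈ (univ \ {j}) \ S', w l = (∑ l ∈ univ \ S', w l) - w j := by
    intro w j S' hj
    have hju : j ∈ univ \ S' := Finset.mem_sdiff.2 ⟨Finset.mem_univ _, hj⟩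
    have h1 : (univ \ {j}) \ S' = (univ \ S').erase j := by
      rw [Finset.erase_eq, sdiff_sdiff_comm]
    rw [h1, ← Finset.sum_erase_add (univ \ S') w hju]
    ring
  have hupdn : ∀ (j : N) (c : ℝ) (S' : Finset N), j ∉ S' →
      ∑ l ∈ univ \ S', Function.update d j c l = (∑ l ∈ univ \ S', d l) - d j + c := by
    intro j c S' hj
    have hju : j ∈ univ \ S' := Finset.mem_sdiff.2 ⟨Finset.mem_univ _, hj⟩
    rw [Finset.sum_update_of_mem hju, ← Finset.sum_erase_add (univ \ S') d hju, Finset.erase_eq]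
    ring
  have hupdm : ∀ (j : N) (c : ℝ) (S' : Finset N), j ∈ S' →
      ∑ l ∈ univ \ S', Function.update d j c l = ∑ l ∈ univ \ S', d l := by
    intro j c S' hj
    refine Finset.sum_congr rfl fun l hl => ?_
    have hlj : l ≠ j := by
      rintro rfl; exact (Finset.mem_sdiff.1 hl).2 hj
    simp [Function.update_of_ne hlj]
  -- powerset splittings
  have hsplit4 : (univ : Finset N).powerset = (pa ∪ pb) ∪ (pa' ∪ pm) := by
    ext S'
    simp only [hpa, hpb, hpa', hpm, Finset.mem_powerset, Finset.mem_union, Finset.mem_filter,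
      Finset.subset_univ, true_and, iff_true_intro (Finset.subset_univ S')]
    tauto
  have hsplitk : ((univ : Finset N) \ {k}).powerset = pa ∪ pm := by
    ext S'
    simp only [hpa, hpm, Finset.mem_powerset, Finset.mem_union, Finset.mem_filter,
      Finset.subset_sdiff, Finset.disjoint_singleton_right, Finset.subset_univ, true_and]
    tauto
  have hspliti : ((univ : Finset N) \ {i}).powerset = pa' ∪ pm := by
    ext S'
    simp only [hpa', hpm, Finset.mem_powerset, Finset.mem_union, Finset.mem_filter,
      Finset.subset_sdiff, Finset.disjoint_singleton_right, Finset.subset_univ, true_and]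
    tauto
  have hsplit6 : (univ : Finset N).powerset = (pa' ∪ pb) ∪ (pa ∪ pm) := by
    ext S'
    simp only [hpa, hpb, hpa', hpm, Finset.mem_powerset, Finset.mem_union, Finset.mem_filter,
      Finset.subset_univ, true_and, iff_true_intro (Finset.subset_univ S')]
    tauto
  -- master computation lemma
  have key : ∀ (T : Finset N) (w : N → ℝ) (s t : Finset (Finset N)) (hs : s.Nonempty)
      (ht : t.Nonempty) (hT : T.powerset = s ∪ t) (c₁ c₂ : ℝ),
      (∀ S' ∈ s, (f S' : ℝ) - ∑ j ∈ S', x j + ∑ j ∈ T \ S', w j = v S' - c₁) →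
      (∀ S' ∈ t, (f S' : ℝ) - ∑ j ∈ S', x j + ∑ j ∈ T \ S', w j = v S' - c₂) →
      fxd f x w T = min (s.inf' hs v - c₁) (t.inf' ht v - c₂) := by
    intro T w s t hs ht hT c₁ c₂ h₁ h₂
    have h0 : fxd f x w T = (s ∪ t).inf' (hT ▸ T.powerset_nonempty)
        (fun S' => (f S' : ℝ) - ∑ j ∈ S', x j + ∑ j ∈ T \ S', w j) :=
      Finset.inf'_congr T.powerset_nonempty hT (fun _ _ => rfl)
    rw [h0, Finset.inf'_union hs ht]
    have e1 : (s.inf' hs fun S' => (f S' : ℝ) - ∑ j ∈ S', x j + ∑ j ∈ T \ S', w j)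
        = s.inf' hs v - c₁ := by
      rw [Finset.inf'_congr hs rfl h₁]; exact inf'_sub_const s hs v c₁
    have e2 : (t.inf' ht fun S' => (f S' : ℝ) - ∑ j ∈ S', x j + ∑ j ∈ T \ S', w j)
        = t.inf' ht v - c₂ := by
      rw [Finset.inf'_congr ht rfl h₂]; exact inf'_sub_const t ht v c₂
    rw [e1, e2]
  -- the seven computations
  have hF1 : fxd f x d univ = min (min a b) (min a' m) := by
    rw [key univ d (pa ∪ pb) (pa' ∪ pm) (hane.mono Finset.subset_union_left)
        (ha'ne.mono Finset.subset_union_left) hsplit4 0 0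
        (fun S' _ => by simp [hv]) (fun S' _ => by simp [hv]),
      Finset.inf'_union hane hbne, Finset.inf'_union ha'ne hmne]
    simp [ha, hb, ha'2, hm]
  have hF2 : fxd f x d (univ \ {i}) = min a' m - d i := by
    rw [key (univ \ {i}) d pa' pm ha'ne hmne hspliti (d i) (d i)
        (fun S' hS' => by
          rw [hdiff d i S' ((hmpa' S').1 hS').2]; simp only [hv]; ring)
        (fun S' hS' => by
          rw [hdiff d i S' ((hmpm S').1 hS').1]; simp only [hv]; ring)]
    rw [← ha'2, ← hm, min_sub_sub_right]
  have hF3 : fxd f x d (univ \ {k}) = min a m - d k := by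
    rw [key (univ \ {k}) d pa pm hane hmne hsplitk (d k) (d k)
        (fun S' hS' => by
          rw [hdiff d k S' ((hmpa S').1 hS').2]; simp only [hv]; ring)
        (fun S' hS' => by
          rw [hdiff d k S' ((hmpm S').1 hS').2]; simp only [hv]; ring)]
    rw [← ha, ← hm, min_sub_sub_right]
  have hE1 : fxd f x d' univ = min (min a b) (min a' m - Δ) := by
    rw [key univ d' (pa ∪ pb) (pa' ∪ pm) (hane.mono Finset.subset_union_left)
        (ha'ne.mono Finset.subset_union_left) hsplit4 0 Δ
        (fun S' hS' => by
          have hi : i ∈ S' := by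
            rcases Finset.mem_union.1 hS' with h | h
            · exact ((hmpa S').1 h).1
            · exact ((hmpb S').1 h).1
          rw [hd', hupdm i (d i - Δ) S' hi]; simp only [hv]; ring)
        (fun S' hS' => by
          have hi : i ∉ S' := by
            rcases Finset.mem_union.1 hS' with h | h
            · exact ((hmpa' S').1 h).2
            · exact ((hmpm S').1 h).1
          rw [hd', hupdn i (d i - Δ) S' hi]; simp only [hv]; ring),
      Finset.inf'_union hane hbne, Finset.inf'_union ha'ne hmne]
    simp only [← ha, ← hb, ← ha'2, ← hm, sub_zero, min_sub_sub_right]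
  have hE2 : fxd f x d' (univ \ {k}) = min (a - d k) (m - (Δ + d k)) := by
    rw [key (univ \ {k}) d' pa pm hane hmne hsplitk (d k) (Δ + d k)
        (fun S' hS' => by
          have hi : i ∈ S' := ((hmpa S').1 hS').1
          have hk : k ∉ S' := ((hmpa S').1 hS').2
          rw [hdiff d' k S' hk, hd', hupdm i (d i - Δ) S' hi,
            Function.update_of_ne hki (d i - Δ) d]
          simp only [hv]; ring)
        (fun S' hS' => by
          have hi : i ∉ S' := ((hmpm S').1 hS').1
          have hk : k ∉ S' := ((hmpm S').1 hS').2
          rw [hdiff d' k S' hk, hd', hupdn i (d i - Δ) S' hi,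
            Function.update_of_ne hki (d i - Δ) d]
          simp only [hv]; ring)]
  have hE3 : fxd f x dk0 univ = min (min a' b) (min a m - d k) := by
    rw [key univ dk0 (pa' ∪ pb) (pa ∪ pm) (ha'ne.mono Finset.subset_union_left)
        (hane.mono Finset.subset_union_left) hsplit6 0 (d k)
        (fun S' hS' => by
          have hk : k ∈ S' := by
            rcases Finset.mem_union.1 hS' with h | h
            · exact ((hmpa' S').1 h).1
            · exact ((hmpb S').1 h).2
          rw [hdk0, hupdm k 0 S' hk]; simp only [hv]; ring)
        (fun S' hS' => by
          have hk : k ∉ S' := by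
            rcases Finset.mem_union.1 hS' with h | h
            · exact ((hmpa S').1 h).2
            · exact ((hmpm S').1 h).2
          rw [hdk0, hupdn k 0 S' hk]; simp only [hv]; ring),
      Finset.inf'_union ha'ne hbne, Finset.inf'_union hane hmne]
    simp only [← ha, ← hb, ← ha'2, ← hm, sub_zero, min_sub_sub_right]
  have hE4 : fxd f x dk0 (univ \ {i}) = min (a' - d i) (m - (d k + d i)) := by
    rw [key (univ \ {i}) dk0 pa' pm ha'ne hmne hspliti (d i) (d k + d i)
        (fun S' hS' => by
          have hk : k ∈ S' := ((hmpa' S').1 hS').1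
          have hi : i ∉ S' := ((hmpa' S').1 hS').2
          rw [hdiff dk0 i S' hi, hdk0, hupdm k 0 S' hk, Function.update_of_ne hik 0 d]
          simp only [hv]; ring)
        (fun S' hS' => by
          have hi : i ∉ S' := ((hmpm S').1 hS').1
          have hk : k ∉ S' := ((hmpm S').1 hS').2
          rw [hdiff dk0 i S' hi, hdk0, hupdn k 0 S' hk, Function.update_of_ne hik 0 d]
          simp only [hv]; ring)]
  -- arithmetic
  set F := fxd f x d univ with hFdef
  have hFa : F ≤ a := by rw [hF1]; exact le_trans (min_le_left _ _) (min_le_left _ _)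
  have hFb : F ≤ b := by rw [hF1]; exact le_trans (min_le_left _ _) (min_le_right _ _)
  have hFa' : F ≤ a' := by rw [hF1]; exact le_trans (min_le_right _ _) (min_le_left _ _)
  have hci : min a' m = F + d i := by
    have h := hnoclinch i; rw [hF2] at h; linarith
  have hck : min a m = F + d k := by
    have h := hnoclinch k; rw [hF3] at h; linarith
  have ha'F : F + d i ≤ a' := by rw [← hci]; exact min_le_left _ _
  have hmFi : F + d i ≤ m := by rw [← hci]; exact min_le_right _ _
  have haF : F + d k ≤ a := by rw [← hck]; exact min_le_left _ _
  have hmFk : F + d k ≤ m := by rw [← hck]; exact min_le_right _ _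
  have hdi : Δ ≤ d i := by linarith
  have hdipos : 0 < d i := lt_of_lt_of_le hΔ hdi
  have hab : min a b = F := by
    have h := hF1
    rw [hci] at h
    rcases le_total (min a b) (F + d i) with hle | hle
    · rw [min_eq_left hle] at h; exact h.symm
    · rw [min_eq_right hle] at h; exfalso; linarith
  have hE3' : fxd f x dk0 univ = F := by
    rw [hE3, hck, add_sub_cancel_right, min_eq_right (le_min hFa' hFb)]
  have hE1' : fxd f x d' univ = F := by
    rw [hE1, hab, hci, min_eq_left (by linarith)]
  have hdk0i : dk0 i = d i := by rw [hdk0]; exact Function.update_of_ne hik 0 d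
  constructor
  · intro h
    rw [hE3', hE4, hdk0i] at h
    have hmin : min (a' - d i) (m - (d k + d i)) = F - d i := by linarith
    have hmm : m = F + d k := by
      rcases le_total (a' - d i) (m - (d k + d i)) with hle | hle
      · rw [min_eq_left hle] at hmin; exfalso; linarith
      · rw [min_eq_right hle] at hmin; linarith
    rw [hE1', hE2]
    rw [min_eq_right (by linarith : m - (Δ + d k) ≤ a - d k)]
    linarith
  · intro h
    have hmm : F + d k < m := by
      rcases lt_or_eq_of_le hmFk with h' | h'
      · exact h'
      · exfalso
        apply h
        rw [hE3', hE4, hdk0i, ← h',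
          min_eq_right (by linarith : F + d k - (d k + d i) ≤ a' - d i)]
        ring
    rw [hE1', hE2]
    have h1 : F - Δ < a - d k := by linarith
    have h2 : F - Δ < m - (Δ + d k) := by linarith
    have h3 := lt_min h1 h2
    linarith
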